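/- A permutation avoids the barred pattern 1\bar{4}23 if and only if it avoids the vincular pattern [12]3; that is, Av(1\bar{4}23) = Av([12]3). -/

import Mathlib

/-- The type of permutations of arbitrary (finite) length: a permutation of
length `n`, written in one-line notation as `w 0, w 1, …, w (n-1)` (using
0-indexed positions and values), is a bijection of `Fin n`. -/
def Permutation : Type := Σ n : ℕ, Equiv.Perm (Fin n)

/-- `f` is an occurrence of the classical pattern `p` in `w`: `f` selects
positions, in increasing order, whose values in `w` are order-isomorphic
to `p`. -/
def IsOcc {k n : ℕ} (p : Equiv.Perm (Fin k)) (w : Equiv.Perm (Fin n))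
    (f : Fin k → Fin n) : Prop :=
  StrictMono f ∧ ∀ i j : Fin k, p i < p j ↔ w (f i) < w (f j)

/-- The permutation `w` contains the classical pattern `p`. -/
def ContainsC {k n : ℕ} (p : Equiv.Perm (Fin k)) (w : Equiv.Perm (Fin n)) : Prop :=
  ∃ f : Fin k → Fin n, IsOcc p w f

/-- The set of permutations avoiding the classical pattern `p`. -/
def AvC {k : ℕ} (p : Equiv.Perm (Fin k)) : Set Permutation :=
  {w : Permutation | ¬ ContainsC p w.2}

/-- A barred pattern: a permutation together with a (nonempty) set of barred
positions. -/
structure BarredPattern where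
  len : ℕ
  perm : Equiv.Perm (Fin len)
  barred : Finset (Fin len)
  barred_nonempty : barred.Nonempty

/-- A barred pattern is proper if the barred positions form a proper subset
of all positions. -/
def BarredPattern.Proper (b : BarredPattern) : Prop := b.barred ≠ Finset.univ

/-- The underlying classical pattern of a barred pattern. -/
def BarredPattern.toPermutation (b : BarredPattern) : Permutation := ⟨b.len, b.perm⟩

/-- `w` contains the barred pattern `b`: there is an occurrence of the
unbarred portion of `b` in `w` (recorded by the values of `g` on the unbarred
positions) that cannot be completed to an occurrence of the underlying
classical pattern of `b` with the barred letters filled in, in their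
prescribed relative positions and values. -/
def BarredPattern.ContainedIn (b : BarredPattern) {n : ℕ}
    (w : Equiv.Perm (Fin n)) : Prop :=
  ∃ g : Fin b.len → Fin n,
    (∀ i j : Fin b.len, i ∉ b.barred → j ∉ b.barred → i < j → g i < g j) ∧
    (∀ i j : Fin b.len, i ∉ b.barred → j ∉ b.barred →
      (b.perm i < b.perm j ↔ w (g i) < w (g j))) ∧
    ¬ ∃ f : Fin b.len → Fin n, IsOcc b.perm w f ∧ ∀ i ∉ b.barred, f i = g i

/-- The set of permutations avoiding the barred pattern `b`. -/
def AvB (b : BarredPattern) : Set Permutation :=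
  {w : Permutation | ¬ b.ContainedIn w.2}

/-- A vincular pattern: a permutation together with a set of bonds, encoded
as elements of `Fin (len+1)`: bond `0` bonds the first letter to the left
endpoint `*`, bond `len` bonds the last letter to the right endpoint `*`, and
a bond `β` with `0 < β < len` bonds the letters in (0-indexed) positions
`β - 1` and `β`. -/
structure VincularPattern where
  len : ℕ
  perm : Equiv.Perm (Fin len)
  bonds : Finset (Fin (len + 1))

/-- A vincular pattern is proper if it has at least one bond and its letters
are not all bonded together into a single block. -/
def VincularPattern.Proper (v : VincularPattern) : Prop :=
  v.bonds.Nonempty ∧ ∃ β : Fin (v.len + 1), 0 < (β : ℕ) ∧ (β : ℕ) < v.len ∧ β ∉ v.bonds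

/-- The underlying classical pattern of a vincular pattern. -/
def VincularPattern.toPermutation (v : VincularPattern) : Permutation := ⟨v.len, v.perm⟩

/-- `w` contains the vincular pattern `v`: there is an occurrence of the
underlying classical pattern of `v` in which any two bonded letters occupy
adjacent positions of `w`, a letter bonded to the left `*` occupies the first
position of `w`, and a letter bonded to the right `*` occupies the last
position of `w`. -/
def VincularPattern.ContainedIn (v : VincularPattern) {n : ℕ}
    (w : Equiv.Perm (Fin n)) : Prop :=
  ∃ f : Fin v.len → Fin n,
    IsOcc v.perm w f ∧
    (∀ β : Fin (v.len + 1), β ∈ v.bonds →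
      ∀ (h1 : 0 < (β : ℕ)) (h2 : (β : ℕ) < v.len),
        (f ⟨(β : ℕ), h2⟩ : ℕ) = (f ⟨(β : ℕ) - 1, by omega⟩ : ℕ) + 1) ∧
    ((0 : Fin (v.len + 1)) ∈ v.bonds → ∀ h : 0 < v.len, (f ⟨0, h⟩ : ℕ) = 0) ∧
    ((⟨v.len, by omega⟩ : Fin (v.len + 1)) ∈ v.bonds →
      ∀ h : 0 < v.len, (f ⟨v.len - 1, by omega⟩ : ℕ) = n - 1)

/-- The set of permutations avoiding the vincular pattern `v`. -/
def AvV (v : VincularPattern) : Set Permutation :=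
  {w : Permutation | ¬ v.ContainedIn w.2}

/-- `bond b`: the set of vincular patterns obtained from the barred pattern
`b` by deleting a nonempty subset `T` of the barred letters (flattening the
remaining letters to a pattern, using the order-preserving bijection `r` onto
the undeleted positions), placing a bond at each site where a letter was
deleted (a site is indexed by the number of undeleted positions to the left
of the deleted letter), and ignoring the bars on any remaining barred
letters. -/
def BarredPattern.bond (b : BarredPattern) : Set VincularPattern :=
  {v : VincularPattern | ∃ T : Finset (Fin b.len), T ⊆ b.barred ∧ T.Nonempty ∧
    ∃ r : Fin v.len → Fin b.len, StrictMono r ∧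
      (∀ i : Fin b.len, i ∉ T ↔ ∃ j : Fin v.len, r j = i) ∧
      (∀ i j : Fin v.len, v.perm i < v.perm j ↔ b.perm (r i) < b.perm (r j)) ∧
      ∀ β : Fin (v.len + 1), β ∈ v.bonds ↔
        ∃ t ∈ T, (β : ℕ) = (Finset.univ.filter fun i : Fin b.len => i ∉ T ∧ i < t).card}

/-- A proper barred pattern `b` is naturally coincidental (nat-co) if
`Av(b) = Av(bond b)`. -/
def BarredPattern.NatCo (b : BarredPattern) : Prop :=
  AvB b = ⋂ v ∈ b.bond, AvV v

/-- `q` is obtained from `p` by inserting a single new letter in position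
`pos`: deleting position `pos` from `q` leaves a sequence order-isomorphic
to `p`. -/
def IsInsertionAt {k : ℕ} (p : Equiv.Perm (Fin k)) (pos : Fin (k + 1))
    (q : Equiv.Perm (Fin (k + 1))) : Prop :=
  ∀ i j : Fin k, p i < p j ↔ q (pos.succAbove i) < q (pos.succAbove j)

/-- `bar v`: the set of barred patterns obtained from the vincular pattern
`v` by replacing a single bond (at site `β`) of `v` by an inserted barred
letter, in such a way that the resulting underlying classical pattern does
not contain `v`, ignoring all remaining bonds. -/
def VincularPattern.bar (v : VincularPattern) : Set BarredPattern :=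
  {b : BarredPattern | ∃ β ∈ v.bonds, ∃ hlen : b.len = v.len + 1,
    b.barred = {finCongr hlen.symm β} ∧
    IsInsertionAt v.perm β ((finCongr hlen).permCongr b.perm) ∧
    ¬ v.ContainedIn ((finCongr hlen).permCongr b.perm)}

/-- A vincular pattern is coincidental if its avoidance set equals the
avoidance set of some finite set of proper barred patterns. -/
def VincularPattern.Coincidental (v : VincularPattern) : Prop :=
  ∃ B : Set BarredPattern, B.Finite ∧ (∀ b ∈ B, b.Proper) ∧
    AvV v = ⋂ b ∈ B, AvB b

/-- `(i, j)` (0-indexed positions) delimits a maximal factor of consecutive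
barred letters of the barred pattern `b`, thereby determining a boycott
of `b`. -/
def BarredPattern.IsBoycottPair (b : BarredPattern) (i j : ℕ) : Prop :=
  i ≤ j ∧ j < b.len ∧
  (∀ p : Fin b.len, i ≤ (p : ℕ) → (p : ℕ) ≤ j → p ∈ b.barred) ∧
  (∀ p : Fin b.len, (p : ℕ) + 1 = i → p ∉ b.barred) ∧
  (∀ p : Fin b.len, (p : ℕ) = j + 1 → p ∉ b.barred)

/-- The boycott `X` determined by the maximal barred factor `(i, j)` of `b`:
the set of (1-indexed) values of the letters in positions `i-1, i, …, j, j+1`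
(those endpoints that exist). -/
def BarredPattern.boycottSet (b : BarredPattern) (i j : ℕ) : Finset ℕ :=
  (Finset.univ.filter fun p : Fin b.len => i ≤ (p : ℕ) + 1 ∧ (p : ℕ) ≤ j + 1).image
    fun p => (b.perm p : ℕ) + 1

/-- `B(X)`: the barred values of the boycott of `b` determined by `(i, j)`. -/
def BarredPattern.boycottB (b : BarredPattern) (i j : ℕ) : Finset ℕ :=
  (Finset.univ.filter fun p : Fin b.len => i ≤ (p : ℕ) ∧ (p : ℕ) ≤ j).image
    fun p => (b.perm p : ℕ) + 1

/-- `U(X)`: the unbarred values of the boycott of `b` determined by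
`(i, j)`. -/
def BarredPattern.boycottU (b : BarredPattern) (i j : ℕ) : Finset ℕ :=
  (Finset.univ.filter fun p : Fin b.len => (p : ℕ) + 1 = i ∨ (p : ℕ) = j + 1).image
    fun p => (b.perm p : ℕ) + 1

/-- The barred pattern `1‾423`: the permutation `1423` with the letter `4`
(in position `1`, 0-indexed) barred. -/
def barred1423 : BarredPattern where
  len := 4
  perm := ⟨![0, 3, 1, 2], ![0, 2, 3, 1], by decide, by decide⟩
  barred := {1}
  barred_nonempty := Finset.singleton_nonempty _

/-- The vincular pattern `[12]3`: the permutation `123` with a bond between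
the letters `1` and `2` (positions `0` and `1`, so bond site `1`). -/
def vincular123 : VincularPattern where
  len := 3
  perm := Equiv.refl (Fin 3)
  bonds := {1}


lemma exists_ascent {n : ℕ} (u : Equiv.Perm (Fin n)) (x y : Fin n)
    (hxy : x < y) (huv : u x < u y) :
    ∃ p : ℕ, (x:ℕ) ≤ p ∧ p + 1 ≤ (y:ℕ) ∧
      ∃ (hp : p < n) (hq : p + 1 < n), u ⟨p, hp⟩ < u ⟨p+1, hq⟩ := by
  by_contra hcon
  push_neg at hcon
  have key : ∀ k : ℕ, ∀ h : (x:ℕ) + k ≤ (y:ℕ),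
      u ⟨(x:ℕ)+k, lt_of_le_of_lt h y.isLt⟩ ≤ u x := by
    intro k
    induction k with
    | zero => intro h; simp
    | succ k ih =>
      intro h
      have h' : (x:ℕ) + k ≤ (y:ℕ) := by omega
      have hp : (x:ℕ) + k < n := by omega
      have hq : (x:ℕ) + k + 1 < n := by omega
      have hno := hcon ((x:ℕ)+k) (by omega) (by omega) hp hq
      have h2 : u ⟨(x:ℕ)+k+1, hq⟩ ≤ u ⟨(x:ℕ)+k, hp⟩ := hno
      have h3 : (⟨(x:ℕ)+(k+1), lt_of_le_of_lt h y.isLt⟩ : Fin n) = ⟨(x:ℕ)+k+1, hq⟩ :=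
        Fin.mk_eq_mk.mpr (by omega)
      rw [h3]
      exact le_trans h2 (ih h')
  have hy : (x:ℕ) + ((y:ℕ) - (x:ℕ)) ≤ (y:ℕ) := by omega
  have hkey := key ((y:ℕ) - (x:ℕ)) hy
  have hxy' : (x:ℕ) < (y:ℕ) := hxy
  have hyy : (⟨(x:ℕ) + ((y:ℕ) - (x:ℕ)), lt_of_le_of_lt hy y.isLt⟩ : Fin n) = y := by
    apply Fin.ext; simp only [Fin.val_mk]; omega
  rw [hyy] at hkey
  exact absurd huv (not_lt.mpr hkey)

set_option maxHeartbeats 1000000 in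
lemma contained_iff {n : ℕ} (u : Equiv.Perm (Fin n)) :
    barred1423.ContainedIn u ↔ vincular123.ContainedIn u := by
  delta barred1423 vincular123
  simp only [BarredPattern.ContainedIn, VincularPattern.ContainedIn, IsOcc,
    barred1423, vincular123, Equiv.coe_fn_mk, Equiv.refl_apply]
  constructor
  · rintro ⟨g, hinc, hval, hno⟩
    have hxy : g 0 < g 2 := hinc 0 2 (by decide) (by decide) (by decide)
    have hyz : g 2 < g 3 := hinc 2 3 (by decide) (by decide) (by decide)
    have huxy : u (g 0) < u (g 2) := (hval 0 2 (by decide) (by decide)).mp (by decide)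
    have huyz : u (g 2) < u (g 3) := (hval 2 3 (by decide) (by decide)).mp (by decide)
    have hP : ∀ p : Fin n, g 0 < p → p < g 2 → u p < u (g 3) := by
      intro p hx hy
      by_contra hc
      push_neg at hc
      have hne : u (g 3) ≠ u p := by
        intro h
        have h2 : g 3 = p := u.injective h
        rw [h2] at hyz
        exact absurd hy (lt_asymm hyz)
      have hzp : u (g 3) < u p := lt_of_le_of_ne hc hne
      apply hno
      clear hno hinc hval hc hne
      refine ⟨![g 0, p, g 2, g 3], ⟨?_, ?_⟩, ?_⟩
      · intro i j hij
        fin_cases i <;> fin_cases j <;> simp_all <;> fin_omega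
      · intro i j
        fin_cases i <;> fin_cases j <;> simp_all <;> fin_omega
      · intro i hi
        fin_cases i <;> simp_all
    clear hinc hval
    obtain ⟨p, hp1, hp2, hpn, hqn, hasc⟩ := exists_ascent u (g 0) (g 2) hxy huxy
    have hyz' : (g 2 : ℕ) < (g 3 : ℕ) := hyz
    have hu2 : u ⟨p + 1, hqn⟩ < u (g 3) := by
      rcases lt_or_eq_of_le hp2 with h | h
      · exact hP _ (by simp only [Fin.lt_def]; omega) (by simp only [Fin.lt_def]; omega)
      · have he : (⟨p + 1, hqn⟩ : Fin n) = g 2 := by apply Fin.ext; simpa using h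
        rw [he]; exact huyz
    refine ⟨![⟨p, hpn⟩, ⟨p + 1, hqn⟩, g 3], ⟨?_, ?_⟩, ?_, ?_, ?_⟩
    · intro i j hij
      fin_cases i <;> fin_cases j <;> simp_all <;> fin_omega
    · intro i j
      fin_cases i <;> fin_cases j <;> simp_all <;> fin_omega
    · intro β hβ h1 h2
      have hb1 : β = 1 := by simpa using hβ
      subst hb1
      simp
    · intro h0
      simp at h0
    · intro h3
      exact absurd h3 (by decide)
  · rintro ⟨f, ⟨hmono, hval⟩, hbond, -, -⟩
    have hb : (f 1 : ℕ) = (f 0 : ℕ) + 1 := by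
      have := hbond 1 (by decide) (by decide) (by decide)
      simpa using this
    have h01 : f 0 < f 1 := hmono (by decide)
    have h12 : f 1 < f 2 := hmono (by decide)
    have hu01 : u (f 0) < u (f 1) := (hval 0 1).mp (by decide)
    have hu12 : u (f 1) < u (f 2) := (hval 1 2).mp (by decide)
    clear hbond
    refine ⟨![f 0, f 0, f 1, f 2], ?_, ?_, ?_⟩
    · intro i j hi hj hij
      fin_cases i <;> fin_cases j <;> simp_all <;> fin_omega
    · intro i j hi hj
      fin_cases i <;> fin_cases j <;> simp_all <;> fin_omega
    · clear hval hmono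
      rintro ⟨f', ⟨hmono', hval'⟩, hext⟩
      have e0 : f' 0 = f 0 := by simpa using hext 0 (by decide)
      have e2 : f' 2 = f 1 := by simpa using hext 2 (by decide)
      have l1 : f' 0 < f' 1 := hmono' (by decide)
      have l2 : f' 1 < f' 2 := hmono' (by decide)
      rw [e0] at l1
      rw [e2] at l2
      have l1' : (f 0 : ℕ) < (f' 1 : ℕ) := l1
      have l2' : (f' 1 : ℕ) < (f 1 : ℕ) := l2
      omega

/-- A permutation avoids the barred pattern `1‾423` if and
only if it avoids the vincular pattern `[12]3`;
that is, `Av(1‾423) = Av([12]3)`. -/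
theorem av_barred1423_eq_av_vincular123 :
    AvB barred1423 = AvV vincular123 := by
  ext w
  simp only [AvB, AvV, Set.mem_setOf_eq]
  exact not_congr (contained_iff w.2)
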